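/- Let c > c' > (2/3)c > 0, r₁ > 0, μ > 0, u₀ > 0, and set λ± = (-(c'+1/r₁) ± √((c'+1/r₁)²+2μ))/2. Define α(t) = u₀ / (λ₊ e^{λ₋(c-c')t} - λ₋ e^{λ₊(c-c')t}) for t ≥ 0. Then α is positive and strictly decreasing on [0,∞), α(t) → 0 as t → ∞, and α'(t) > -(μ/4)·α(t) for all t ≥ 0. -/

import Mathlib

open Filter Topology Set

set_option maxHeartbeats 1000000 in
theorem stmt8 (c c' r₁ μ u₀ : ℝ) (hc3 : (2 / 3) * c < c') (hc' : c' < c)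
    (hcpos : 0 < c) (hr : 0 < r₁) (hμ : 0 < μ) (hu : 0 < u₀)
    (lp lm : ℝ)
    (hlp : lp = (-(c' + 1 / r₁) + Real.sqrt ((c' + 1 / r₁) ^ 2 + 2 * μ)) / 2)
    (hlm : lm = (-(c' + 1 / r₁) - Real.sqrt ((c' + 1 / r₁) ^ 2 + 2 * μ)) / 2)
    (α : ℝ → ℝ)
    (hα : α = fun t => u₀ /
      (lp * Real.exp (lm * (c - c') * t) - lm * Real.exp (lp * (c - c') * t))) :
    (∀ t ≥ (0:ℝ), 0 < α t) ∧
    StrictAntiOn α (Set.Ici 0) ∧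
    Tendsto α atTop (𝓝 0) ∧
    (∀ t ≥ (0:ℝ), deriv α t > -(μ / 4) * α t) := by
  have hr1 : 0 < 1 / r₁ := by positivity
  have hc'pos : 0 < c' := by linarith
  set a := c' + 1 / r₁ with ha
  have hapos : 0 < a := by positivity
  have hac' : c' < a := by rw [ha]; linarith
  have hs2 : Real.sqrt (a ^ 2 + 2 * μ) ^ 2 = a ^ 2 + 2 * μ :=
    Real.sq_sqrt (by positivity)
  set s := Real.sqrt (a ^ 2 + 2 * μ) with hs
  have hsnn : 0 ≤ s := Real.sqrt_nonneg _
  have hsa : a < s := by nlinarith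
  clear_value s
  clear_value a
  have hlp0 : 0 < lp := by rw [hlp]; linarith
  have hlm0 : lm < 0 := by rw [hlm]; linarith
  have hlplm : lp * lm = -(μ / 2) := by rw [hlp, hlm]; nlinarith
  set k := c - c' with hk
  clear_value k
  have hkpos : 0 < k := by rw [hk]; linarith
  have hk2 : 2 * k < -lm := by
    have h1 : a < -lm := by rw [hlm]; linarith
    have h2 : 2 * k < c' := by rw [hk]; linarith
    linarith
  set D : ℝ → ℝ := fun t => lp * Real.exp (lm * k * t) - lm * Real.exp (lp * k * t)
    with hD
  clear_value D
  have hDpos : ∀ t, 0 < D t := by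
    intro t
    have h1 := mul_pos hlp0 (Real.exp_pos (lm * k * t))
    have h2 := mul_pos (neg_pos.2 hlm0) (Real.exp_pos (lp * k * t))
    simp only [hD]
    nlinarith
  have hαD : α = fun t => u₀ / D t := by simp only [hα, hD]
  have hD' : ∀ t, HasDerivAt D
      (lp * lm * k * (Real.exp (lm * k * t) - Real.exp (lp * k * t))) t := by
    intro t
    simp only [hD]
    have h1 : HasDerivAt (fun t => Real.exp (lm * k * t))
        (Real.exp (lm * k * t) * (lm * k)) t := by
      simpa using ((hasDerivAt_id t).const_mul (lm * k)).exp
    have h2 : HasDerivAt (fun t => Real.exp (lp * k * t))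
        (Real.exp (lp * k * t) * (lp * k)) t := by
      simpa using ((hasDerivAt_id t).const_mul (lp * k)).exp
    have := ((h1.const_mul lp).sub (h2.const_mul lm))
    exact this.congr_deriv (by ring)
  have hα' : ∀ t, HasDerivAt α
      ((0 * D t - u₀ * (lp * lm * k * (Real.exp (lm * k * t) - Real.exp (lp * k * t)))) / (D t) ^ 2) t := by
    intro t
    rw [hαD]
    exact (hasDerivAt_const t u₀).div (hD' t) (ne_of_gt (hDpos t))
  -- key inequality: D' < (μ/4) * D, for all t
  have hkey : ∀ t : ℝ,
      lp * lm * k * (Real.exp (lm * k * t) - Real.exp (lp * k * t)) < μ / 4 * D t := by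
    intro t
    have e1 := Real.exp_pos (lm * k * t)
    have e2 := Real.exp_pos (lp * k * t)
    have hsub : lp * lm * k * (Real.exp (lm * k * t) - Real.exp (lp * k * t))
        = -(μ / 2) * k * (Real.exp (lm * k * t) - Real.exp (lp * k * t)) := by
      linear_combination (k * (Real.exp (lm * k * t) - Real.exp (lp * k * t))) * hlplm
    rw [hsub]; simp only [hD]
    linarith [mul_pos (mul_pos hμ hkpos) e1,
      mul_pos (mul_pos hμ (show (0:ℝ) < -lm - 2 * k by linarith)) e2,
      mul_pos (mul_pos hμ hlp0) e1]
  have hpos : ∀ t ≥ (0:ℝ), 0 < α t := by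
    intro t _
    rw [hαD]
    exact div_pos hu (hDpos t)
  refine ⟨hpos, ?_, ?_, ?_⟩
  · -- strictly decreasing
    apply strictAntiOn_of_deriv_neg (convex_Ici 0)
    · exact fun t _ => (hα' t).differentiableAt.continuousAt.continuousWithinAt
    · intro t ht
      rw [interior_Ici] at ht
      have ht0 : 0 < t := ht
      rw [(hα' t).deriv]
      have hlt : lm * k * t < lp * k * t := by
        have h : lm * k < lp * k := by nlinarith
        nlinarith
      have hexp : Real.exp (lm * k * t) < Real.exp (lp * k * t) := Real.exp_lt_exp.2 hlt
      have hD'pos : 0 < lp * lm * k * (Real.exp (lm * k * t) - Real.exp (lp * k * t)) := by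
        have hrw : lp * lm * k * (Real.exp (lm * k * t) - Real.exp (lp * k * t))
            = μ / 2 * k * (Real.exp (lp * k * t) - Real.exp (lm * k * t)) := by
          linear_combination (k * (Real.exp (lm * k * t) - Real.exp (lp * k * t))) * hlplm
        rw [hrw]
        exact mul_pos (mul_pos (by linarith) hkpos) (by linarith)
      have hDt := hDpos t
      have h2 : (0:ℝ) < (D t) ^ 2 := by positivity
      apply div_neg_of_neg_of_pos _ h2
      nlinarith
  · -- tendsto 0
    rw [hαD]
    apply tendsto_const_nhds.div_atTop
    have h2 : Tendsto (fun t => -lm * Real.exp (lp * k * t)) atTop atTop := by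
      apply Tendsto.const_mul_atTop (by linarith : (0:ℝ) < -lm)
      exact Real.tendsto_exp_atTop.comp (tendsto_id.const_mul_atTop (by positivity : (0:ℝ) < lp * k))
    have h1 : Tendsto (fun t => lp * Real.exp (lm * k * t)) atTop (𝓝 0) := by
      have hb : Tendsto (fun t : ℝ => lm * k * t) atTop atBot := by
        have : lm * k < 0 := by nlinarith
        exact tendsto_id.const_mul_atTop_of_neg this
      have := (Real.tendsto_exp_atBot.comp hb).const_mul lp
      simpa using this
    have := h1.add_atTop h2
    apply this.congr
    intro t; simp only [hD]; ring
  · -- derivative bound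
    intro t _
    rw [(hα' t).deriv]
    have hDt := hDpos t
    have hD2 : (0:ℝ) < (D t) ^ 2 := by positivity
    rw [hαD]
    have key := hkey t
    set E := lp * lm * k * (Real.exp (lm * k * t) - Real.exp (lp * k * t)) with hE
    have heq : (0 * D t - u₀ * E) / (D t) ^ 2 - (-(μ / 4) * (u₀ / D t))
        = u₀ * (μ / 4 * D t - E) / (D t) ^ 2 := by
      field_simp
      ring
    have hp : 0 < u₀ * (μ / 4 * D t - E) / (D t) ^ 2 :=
      div_pos (mul_pos hu (by linarith)) hD2
    simp only [gt_iff_lt]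
    linarith
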